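/- Let r ∈ [2,∞), q, p ≥ 0 with q + p = 1, and let b = q^{1/(r−1)} / (q^{1/(r−1)} + p^{1/(r−1)}) (when q + p > 0). Then 2^{r−2}[(1−b)^r q + b^r p] ≥ p(1−p) ≥ min{(1−φ)q, φp} for every φ ∈ [0,1]. -/

import Mathlib

lemma aux_pow2 (a c s : ℝ) (ha : 0 ≤ a) (hc : 0 ≤ c) (hs : 1 ≤ s) :
    (a + c) ^ s ≤ 2 ^ (s - 1) * (a ^ s + c ^ s) := by
  lift a to NNReal using ha
  lift c to NNReal using hc
  have h := NNReal.rpow_add_le_mul_rpow_add_rpow a c hs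
  have := (NNReal.coe_le_coe).2 h
  push_cast at this
  convert this using 2


theorem stmt_17 (r q p : ℝ) (hr : 2 ≤ r) (hq : 0 ≤ q) (hp : 0 ≤ p)
    (hqp : q + p = 1) (b : ℝ)
    (hb : b = q ^ (1 / (r - 1)) / (q ^ (1 / (r - 1)) + p ^ (1 / (r - 1)))) :
    p * (1 - p) ≤ 2 ^ (r - 2) * ((1 - b) ^ r * q + b ^ r * p) ∧
      ∀ φ : ℝ, 0 ≤ φ → φ ≤ 1 → min ((1 - φ) * q) (φ * p) ≤ p * (1 - p) := by
  have hq1 : 1 - p = q := by linarith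
  constructor
  · -- main inequality
    rcases eq_or_lt_of_le hp with hp0 | hp0
    · -- p = 0
      rw [hq1, ← hp0]
      have h1 : (0:ℝ) ≤ 2 ^ (r - 2) := Real.rpow_nonneg (by norm_num) _
      have hb01 : 0 ≤ b ∧ b ≤ 1 := by
        rw [hb, ← hp0]
        have hrne : 1 / (r - 1) ≠ 0 := (one_div_pos.mpr (by linarith)).ne'
        have : (0:ℝ) ^ (1 / (r - 1)) = 0 := Real.zero_rpow hrne
        constructor
        · positivity
        · rw [this, add_zero]
          rcases eq_or_lt_of_le (Real.rpow_nonneg hq (1 / (r - 1))) with h | h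
          · rw [← h]; norm_num
          · rw [div_self h.ne']
      have : (0:ℝ) ≤ (1 - b) ^ r * q + b ^ r * 0 := by
        have h2 : 0 ≤ (1 - b) ^ r := Real.rpow_nonneg (by linarith [hb01.2]) _
        have h3 : 0 ≤ b ^ r := Real.rpow_nonneg hb01.1 _
        nlinarith
      nlinarith
    rcases eq_or_lt_of_le hq with hq0 | hq0
    · -- q = 0
      rw [hq1, ← hq0]
      have h1 : (0:ℝ) ≤ 2 ^ (r - 2) := Real.rpow_nonneg (by norm_num) _
      have h2 : 0 ≤ (1 - b) ^ r := by
        have : 0 ≤ 1 - b := by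
          rw [hb, ← hq0,
            Real.zero_rpow ((one_div_pos.mpr (by linarith : (0:ℝ) < r - 1)).ne'), zero_add,
            zero_div]
          norm_num
        exact Real.rpow_nonneg this _
      have h3 : 0 ≤ b ^ r := by
        have : 0 ≤ b := by
          rw [hb]; positivity
        exact Real.rpow_nonneg this _
      have h4 : 0 ≤ b ^ r * p := mul_nonneg h3 hp
      nlinarith [mul_nonneg h1 h4]
    -- main case 0 < p, 0 < q
    set s := r - 1 with hs
    have hs1 : 1 ≤ s := by simp [hs]; linarith
    have hs0 : s ≠ 0 := by positivity
    set a := q ^ (1 / s) with ha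
    set c := p ^ (1 / s) with hc
    have ha0 : 0 < a := Real.rpow_pos_of_pos hq0 _
    have hc0 : 0 < c := Real.rpow_pos_of_pos hp0 _
    have hac : 0 < a + c := by linarith
    have haq : a ^ s = q := by
      rw [ha, one_div, Real.rpow_inv_rpow hq hs0]
    have hcp : c ^ s = p := by
      rw [hc, one_div, Real.rpow_inv_rpow hp hs0]
    have hb' : b = a / (a + c) := hb
    have h1b : 1 - b = c / (a + c) := by
      rw [hb']; field_simp; ring
    -- key computation
    have hrs : r = s + 1 := by ring
    have hcr : c ^ r = c ^ s * c := by
      rw [hrs, Real.rpow_add hc0, Real.rpow_one]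
    have har : a ^ r = a ^ s * a := by
      rw [hrs, Real.rpow_add ha0, Real.rpow_one]
    have hacr : (a + c) ^ r = (a + c) ^ s * (a + c) := by
      rw [hrs, Real.rpow_add hac, Real.rpow_one]
    have hkey : (1 - b) ^ r * q + b ^ r * p = (a * c) ^ s / (a + c) ^ s := by
      rw [h1b, hb', Real.div_rpow hc0.le hac.le, Real.div_rpow ha0.le hac.le,
        ← haq, ← hcp, hcr, har, hacr, Real.mul_rpow ha0.le hc0.le]
      field_simp
      ring
    rw [hkey, hq1]
    have hsum : a ^ s + c ^ s = 1 := by rw [haq, hcp]; linarith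
    have hpow : (a + c) ^ s ≤ 2 ^ (s - 1) := by
      have := aux_pow2 a c s ha0.le hc0.le hs1
      rwa [hsum, mul_one] at this
    have h2 : (2:ℝ) ^ (r - 2) = 2 ^ (s - 1) := by congr 1; rw [hs]; ring
    have hacs : (0:ℝ) < (a + c) ^ s := Real.rpow_pos_of_pos hac _
    have hpq : p * q = (a * c) ^ s := by
      rw [Real.mul_rpow ha0.le hc0.le, haq, hcp]; ring
    rw [h2, ← hpq]
    have hmono : p * q / (a + c) ^ s * (a + c) ^ s ≤ p * q / (a + c) ^ s * 2 ^ (s - 1) := by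
      apply mul_le_mul_of_nonneg_left hpow
      positivity
    calc p * q = p * q / (a + c) ^ s * (a + c) ^ s := by field_simp
      _ ≤ p * q / (a + c) ^ s * 2 ^ (s - 1) := hmono
      _ = 2 ^ (s - 1) * (p * q / (a + c) ^ s) := by ring
  · intro φ hφ0 hφ1
    rw [hq1]
    rcases le_total φ q with h | h
    · exact le_trans (min_le_right _ _) (by nlinarith)
    · exact le_trans (min_le_left _ _) (by nlinarith)
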